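/- arXiv:2007.12040 — 4 statements merged into one kernel-verified Lean document; each statement's English description precedes it below -/
import Mathlib

section
/- For every ε ∈ (1/2, 1), the mean recurrence time of the origin for the Gillis random walk is finite and equals Σ_{n≥1} n F_n = 2ε/(2ε − 1). -/
open Filter

/-- Probability of a right step in the Gillis walk. -/
noncomputable def gR (ε : ℝ) (j : ℤ) : ℝ :=
  if j = 0 then 1 / 2 else (1 - ε / (j : ℝ)) / 2

/-- Probability of a left step in the Gillis walk. -/
noncomputable def gL (ε : ℝ) (j : ℤ) : ℝ :=
  if j = 0 then 1 / 2 else (1 + ε / (j : ℝ)) / 2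

/-- Occupation probabilities of the Gillis walk started at the origin. -/
noncomputable def gP (ε : ℝ) : ℕ → ℤ → ℝ
  | 0, j => if j = 0 then 1 else 0
  | n + 1, j => gR ε (j - 1) * gP ε n (j - 1) + gL ε (j + 1) * gP ε n (j + 1)

/-- Taboo occupation probabilities: walk killed upon hitting the origin. -/
noncomputable def gQ (ε : ℝ) : ℕ → ℤ → ℝ
  | 0, j => if j = 0 then 1 else 0
  | n + 1, j => if j = 0 then 0 else gR ε (j - 1) * gQ ε n (j - 1) + gL ε (j + 1) * gQ ε n (j + 1)

/-- First-return probabilities to the origin. -/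
noncomputable def gF (ε : ℝ) : ℕ → ℝ
  | 0 => 0
  | n + 1 => gR ε (-1) * gQ ε n (-1) + gL ε 1 * gQ ε n 1

lemma gRL_add (ε : ℝ) (j : ℤ) : gR ε j + gL ε j = 1 := by
  unfold gR gL
  by_cases h : j = 0 <;> simp [h] <;> ring

lemma gR_nonneg {ε : ℝ} (h0 : 0 ≤ ε) (h1 : ε ≤ 1) (j : ℤ) : 0 ≤ gR ε j := by
  unfold gR
  by_cases h : j = 0
  · simp [h]
  · rw [if_neg h]
    have : ε / (j : ℝ) ≤ 1 := by
      rcases lt_or_gt_of_ne h with hj | hj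
      · have hj' : (j : ℝ) < 0 := by exact_mod_cast hj
        have : ε / (j : ℝ) ≤ 0 := div_nonpos_of_nonneg_of_nonpos h0 hj'.le
        linarith
      · have hj' : (1 : ℝ) ≤ (j : ℝ) := by exact_mod_cast hj
        exact (div_le_self h0 hj').trans h1
    linarith

lemma gL_nonneg {ε : ℝ} (h0 : 0 ≤ ε) (h1 : ε ≤ 1) (j : ℤ) : 0 ≤ gL ε j := by
  unfold gL
  by_cases h : j = 0
  · simp [h]
  · rw [if_neg h]
    have : -1 ≤ ε / (j : ℝ) := by
      rcases lt_or_gt_of_ne h with hj | hj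
      · have hj' : (1 : ℝ) ≤ ((-j : ℤ) : ℝ) := by exact_mod_cast (by omega : (1:ℤ) ≤ -j)
        push_cast at hj'
        have h2 : ε / (-(j:ℝ)) ≤ ε := div_le_self h0 hj'
        have h3 : ε / (j:ℝ) = -(ε / (-(j:ℝ))) := by
          rw [div_neg]
          ring
        rw [h3]
        linarith
      · have hj' : (0 : ℝ) < (j : ℝ) := by exact_mod_cast hj
        have : 0 ≤ ε / (j : ℝ) := div_nonneg h0 hj'.le
        linarith
    linarith

lemma gQ_succ (ε : ℝ) (n : ℕ) (j : ℤ) :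
    gQ ε (n + 1) j = if j = 0 then 0 else
      gR ε (j - 1) * gQ ε n (j - 1) + gL ε (j + 1) * gQ ε n (j + 1) := rfl

lemma gQ_zero_of_ne (ε : ℝ) {j : ℤ} (h : j ≠ 0) : gQ ε 0 j = (0:ℝ) := by
  simp [gQ, h]

lemma gQ_nonneg {ε : ℝ} (h0 : 0 ≤ ε) (h1 : ε ≤ 1) : ∀ n j, 0 ≤ gQ ε n j := by
  intro n
  induction n with
  | zero => intro j; by_cases h : j = 0 <;> simp [gQ, h]
  | succ n ih =>
    intro j
    rw [gQ_succ]
    by_cases h : j = 0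
    · simp [h]
    · rw [if_neg h]
      have := gR_nonneg h0 h1 (j - 1)
      have := gL_nonneg h0 h1 (j + 1)
      have := ih (j - 1)
      have := ih (j + 1)
      positivity

lemma gF_nonneg {ε : ℝ} (h0 : 0 ≤ ε) (h1 : ε ≤ 1) (n : ℕ) : 0 ≤ gF ε n := by
  cases n with
  | zero => simp [gF]
  | succ n =>
    show (0:ℝ) ≤ gR ε (-1) * gQ ε n (-1) + gL ε 1 * gQ ε n 1
    have := gR_nonneg h0 h1 (-1)
    have := gL_nonneg h0 h1 1
    have := gQ_nonneg h0 h1 n (-1)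
    have := gQ_nonneg h0 h1 n 1
    positivity

lemma gQ_supp (ε : ℝ) : ∀ (n : ℕ) (j : ℤ), ((n:ℤ) < j ∨ j < -(n:ℤ)) → gQ ε n j = 0 := by
  intro n
  induction n with
  | zero => intro j hj; apply gQ_zero_of_ne; omega
  | succ n ih =>
    intro j hj
    have hj0 : j ≠ 0 := by push_cast at hj; omega
    rw [gQ_succ, if_neg hj0]
    rw [ih (j-1) (by push_cast at hj ⊢; omega), ih (j+1) (by push_cast at hj ⊢; omega)]
    ring

lemma gQ_zero_at_zero (ε : ℝ) {n : ℕ} (hn : 1 ≤ n) : gQ ε n 0 = 0 := by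
  obtain ⟨m, rfl⟩ := Nat.exists_eq_add_of_le hn
  rw [add_comm, gQ_succ, if_pos rfl]

section summability

variable (ε : ℝ)

lemma gQ_summable_gen (n : ℕ) (w : ℤ → ℝ) (a : ℤ) :
    Summable (fun j : ℤ => w j * gQ ε n (j + a)) := by
  apply summable_of_ne_finset_zero (s := Finset.Icc (-(n:ℤ) - a) ((n:ℤ) - a))
  intro j hj
  rw [Finset.mem_Icc] at hj
  rw [gQ_supp ε n (j + a) (by omega), mul_zero]

lemma gQ_summable (n : ℕ) (w : ℤ → ℝ) :
    Summable (fun j : ℤ => w j * gQ ε n j) := by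
  have := gQ_summable_gen ε n w 0
  simpa using this

end summability

/-- Master identity: weighted sum of taboo probabilities after one step. -/
lemma gQ_key (ε : ℝ) (w : ℤ → ℝ) (n : ℕ) :
    ∑' j : ℤ, w j * gQ ε (n+1) j
      = (∑' j : ℤ, gQ ε n j * (gR ε j * w (j+1) + gL ε j * w (j-1))) - w 0 * gF ε (n+1) := by
  have hA : Summable (fun j : ℤ => w j * (gR ε (j-1) * gQ ε n (j-1))) := by
    have := gQ_summable_gen ε n (fun j => w j * gR ε (j-1)) (-1)
    simpa [mul_assoc, sub_eq_add_neg] using this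
  have hB : Summable (fun j : ℤ => w j * (gL ε (j+1) * gQ ε n (j+1))) := by
    have := gQ_summable_gen ε n (fun j => w j * gL ε (j+1)) 1
    simpa [mul_assoc] using this
  have hI : Summable (fun j : ℤ => if j = 0 then w 0 * gF ε (n+1) else 0) := by
    apply summable_of_ne_finset_zero (s := {(0:ℤ)})
    intro j hj
    simp at hj
    rw [if_neg hj]
  have h1 : ∀ j : ℤ, w j * gQ ε (n+1) j
      = (w j * (gR ε (j-1) * gQ ε n (j-1)) + w j * (gL ε (j+1) * gQ ε n (j+1)))
        - (if j = 0 then w 0 * gF ε (n+1) else 0) := by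
    intro j
    rw [gQ_succ]
    by_cases hj : j = 0
    · subst hj
      rw [if_pos rfl, if_pos rfl]
      have hgF : gF ε (n+1) = gR ε (-1) * gQ ε n (-1) + gL ε 1 * gQ ε n 1 := rfl
      rw [hgF]
      norm_num
      ring
    · rw [if_neg hj, if_neg hj]
      ring
  calc ∑' j : ℤ, w j * gQ ε (n+1) j
      = ∑' j : ℤ, ((w j * (gR ε (j-1) * gQ ε n (j-1)) + w j * (gL ε (j+1) * gQ ε n (j+1)))
        - (if j = 0 then w 0 * gF ε (n+1) else 0)) := tsum_congr h1
    _ = (∑' j : ℤ, (w j * (gR ε (j-1) * gQ ε n (j-1)) + w j * (gL ε (j+1) * gQ ε n (j+1))))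
        - ∑' j : ℤ, (if j = 0 then w 0 * gF ε (n+1) else 0) := Summable.tsum_sub (hA.add hB) hI
    _ = ((∑' j : ℤ, w j * (gR ε (j-1) * gQ ε n (j-1)))
        + ∑' j : ℤ, w j * (gL ε (j+1) * gQ ε n (j+1))) - w 0 * gF ε (n+1) := by
        rw [Summable.tsum_add hA hB, tsum_ite_eq]
    _ = ((∑' j : ℤ, w (j+1) * (gR ε j * gQ ε n j))
        + ∑' j : ℤ, w (j-1) * (gL ε j * gQ ε n j)) - w 0 * gF ε (n+1) := by
        congr 1
        congr 1
        · rw [← (Equiv.addRight (1:ℤ)).tsum_eq (fun j => w j * (gR ε (j-1) * gQ ε n (j-1)))]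
          apply tsum_congr
          intro j
          simp
        · rw [← (Equiv.subRight (1:ℤ)).tsum_eq (fun j => w j * (gL ε (j+1) * gQ ε n (j+1)))]
          apply tsum_congr
          intro j
          simp
    _ = (∑' j : ℤ, gQ ε n j * (gR ε j * w (j+1) + gL ε j * w (j-1))) - w 0 * gF ε (n+1) := by
        congr 1
        rw [← Summable.tsum_add]
        · apply tsum_congr; intro j; ring
        · have := gQ_summable_gen ε n (fun j => w (j+1) * gR ε j) 0
          simpa [mul_assoc] using this
        · have := gQ_summable_gen ε n (fun j => w (j-1) * gL ε j) 0
          simpa [mul_assoc] using this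

/-- Decomposition of occupation probabilities by time of first return. -/
lemma gP_decomp (ε : ℝ) : ∀ n (j : ℤ),
    gP ε n j = gQ ε n j + ∑ k ∈ Finset.Icc 1 n, gF ε k * gP ε (n - k) j := by
  intro n
  induction n with
  | zero => intro j; simp [gP, gQ]
  | succ n ih =>
    intro j
    have hstep : gP ε (n+1) j = gR ε (j - 1) * gP ε n (j - 1) + gL ε (j + 1) * gP ε n (j + 1) := rfl
    rw [hstep, ih (j-1), ih (j+1)]
    have hA : gR ε (j-1) * gQ ε n (j-1) + gL ε (j+1) * gQ ε n (j+1)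
        = gQ ε (n+1) j + gF ε (n+1) * gP ε 0 j := by
      by_cases hj : j = 0
      · subst hj
        rw [gQ_succ, if_pos rfl]
        show _ = 0 + gF ε (n+1) * (if (0:ℤ) = 0 then (1:ℝ) else 0)
        rw [if_pos rfl]
        show gR ε (0-1) * gQ ε n (0-1) + gL ε (0+1) * gQ ε n (0+1)
            = 0 + (gR ε (-1) * gQ ε n (-1) + gL ε 1 * gQ ε n 1) * 1
        norm_num
      · rw [gQ_succ, if_neg hj]
        show _ = _ + gF ε (n+1) * (if j = 0 then (1:ℝ) else 0)
        rw [if_neg hj]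
        ring
    have hsum : gR ε (j-1) * (∑ k ∈ Finset.Icc 1 n, gF ε k * gP ε (n - k) (j-1))
        + gL ε (j+1) * (∑ k ∈ Finset.Icc 1 n, gF ε k * gP ε (n - k) (j+1))
        = ∑ k ∈ Finset.Icc 1 n, gF ε k * gP ε (n + 1 - k) j := by
      rw [Finset.mul_sum, Finset.mul_sum, ← Finset.sum_add_distrib]
      apply Finset.sum_congr rfl
      intro k hk
      rw [Finset.mem_Icc] at hk
      have hk' : n + 1 - k = (n - k) + 1 := by omega
      rw [hk']
      have : gP ε ((n-k)+1) j = gR ε (j - 1) * gP ε (n-k) (j - 1) + gL ε (j + 1) * gP ε (n-k) (j + 1) := rfl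
      rw [this]
      ring
    have hfin : gF ε (n+1) * gP ε 0 j = gF ε (n+1) * gP ε (n + 1 - (n+1)) j := by
      norm_num
    calc gR ε (j - 1) * (gQ ε n (j - 1) + ∑ k ∈ Finset.Icc 1 n, gF ε k * gP ε (n - k) (j - 1))
          + gL ε (j + 1) * (gQ ε n (j + 1) + ∑ k ∈ Finset.Icc 1 n, gF ε k * gP ε (n - k) (j + 1))
        = (gR ε (j-1) * gQ ε n (j-1) + gL ε (j+1) * gQ ε n (j+1))
          + (gR ε (j-1) * (∑ k ∈ Finset.Icc 1 n, gF ε k * gP ε (n - k) (j-1))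
           + gL ε (j+1) * (∑ k ∈ Finset.Icc 1 n, gF ε k * gP ε (n - k) (j+1))) := by ring
      _ = gQ ε (n+1) j + (gF ε (n+1) * gP ε (n + 1 - (n+1)) j
            + ∑ k ∈ Finset.Icc 1 n, gF ε k * gP ε (n + 1 - k) j) := by
          rw [hA, hsum, hfin]; ring
      _ = gQ ε (n+1) j + ∑ k ∈ Finset.Icc 1 (n+1), gF ε k * gP ε (n + 1 - k) j := by
          rw [Finset.sum_Icc_succ_top (by omega : 1 ≤ n + 1)]
          ring

lemma gP_renewal (ε : ℝ) {n : ℕ} (hn : 1 ≤ n) :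
    gP ε n 0 = ∑ k ∈ Finset.Icc 1 n, gF ε k * gP ε (n - k) 0 := by
  have := gP_decomp ε n 0
  rwa [gQ_zero_at_zero ε hn, zero_add] at this

lemma gP_zero_zero (ε : ℝ) : gP ε 0 0 = 1 := by simp [gP]

/-- Uniqueness: the renewal equation determines `F`. -/
lemma F_eq_gF (ε : ℝ) (F : ℕ → ℝ) (hF0 : F 0 = 0)
    (hren : ∀ n : ℕ, 1 ≤ n → gP ε n 0 = ∑ k ∈ Finset.Icc 1 n, F k * gP ε (n - k) 0) :
    ∀ n, F n = gF ε n := by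
  intro n
  induction n using Nat.strong_induction_on with
  | _ n ih =>
    match n with
    | 0 => simpa [gF] using hF0
    | (m+1) =>
      have h1 := hren (m+1) (by omega)
      have h2 := gP_renewal ε (n := m+1) (by omega)
      rw [Finset.sum_Icc_succ_top (by omega : 1 ≤ m + 1)] at h1 h2
      have hsame : ∑ k ∈ Finset.Icc 1 m, F k * gP ε (m + 1 - k) 0
          = ∑ k ∈ Finset.Icc 1 m, gF ε k * gP ε (m + 1 - k) 0 := by
        apply Finset.sum_congr rfl
        intro k hk
        rw [Finset.mem_Icc] at hk
        rw [ih k (by omega)]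
      rw [hsame] at h1
      have : F (m+1) * gP ε (m + 1 - (m+1)) 0 = gF ε (m+1) * gP ε (m + 1 - (m+1)) 0 := by
        linarith [h1, h2]
      simpa [gP_zero_zero] using this

section moments

variable (ε : ℝ)

/-- Survival probability of the taboo walk. -/
noncomputable def tQ (n : ℕ) : ℝ := ∑' j : ℤ, gQ ε n j

/-- Second moment of the taboo walk. -/
noncomputable def wQ (n : ℕ) : ℝ := ∑' j : ℤ, ((j:ℝ))^2 * gQ ε n j

/-- Fourth moment of the taboo walk. -/
noncomputable def uQ (n : ℕ) : ℝ := ∑' j : ℤ, ((j:ℝ))^4 * gQ ε n j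

lemma tQ_eq (n : ℕ) : tQ ε n = ∑' j : ℤ, (fun _ => (1:ℝ)) j * gQ ε n j := by
  unfold tQ; apply tsum_congr; intro j; ring

lemma tQ_zero : tQ ε 0 = 1 := by
  unfold tQ
  have : ∀ j : ℤ, gQ ε 0 j = if j = 0 then (1:ℝ) else 0 := fun j => rfl
  rw [tsum_congr this, tsum_ite_eq]

lemma tQ_succ (n : ℕ) : tQ ε (n+1) = tQ ε n - gF ε (n+1) := by
  have h := gQ_key ε (fun _ => (1:ℝ)) n
  simp only [one_mul, mul_one, gRL_add] at h
  unfold tQ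
  rw [h]

lemma gQ_one (j : ℤ) : gQ ε 1 j = if j = 1 then 1/2 else if j = -1 then 1/2 else 0 := by
  rw [gQ_succ]
  rcases eq_or_ne j 0 with rfl | h0
  · norm_num
  rcases eq_or_ne j 1 with rfl | h1
  · norm_num [gQ, gR]
  rcases eq_or_ne j (-1) with rfl | hm1
  · norm_num [gQ, gL]
  · rw [if_neg h0, if_neg h1, if_neg hm1]
    rw [gQ_zero_of_ne ε (by omega), gQ_zero_of_ne ε (by omega)]
    ring

lemma sumQ_one (w : ℤ → ℝ) : ∑' j : ℤ, w j * gQ ε 1 j = (w 1 + w (-1)) * (1/2) := by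
  rw [tsum_eq_sum (s := ({1, -1} : Finset ℤ)) ?h]
  · rw [Finset.sum_pair (by decide : (1:ℤ) ≠ -1)]
    rw [gQ_one, gQ_one]
    norm_num
    ring
  · intro j hj
    simp only [Finset.mem_insert, Finset.mem_singleton] at hj
    push_neg at hj
    rw [gQ_one, if_neg hj.1, if_neg hj.2, mul_zero]

lemma tQ_one : tQ ε 1 = 1 := by
  rw [tQ_eq, sumQ_one]; norm_num

lemma wQ_one : wQ ε 1 = 1 := by
  unfold wQ
  rw [sumQ_one]; norm_num

lemma uQ_one : uQ ε 1 = 1 := by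
  unfold uQ
  rw [sumQ_one]; norm_num

lemma tQ_nonneg {ε : ℝ} (h0 : 0 ≤ ε) (h1 : ε ≤ 1) (n : ℕ) : 0 ≤ tQ ε n :=
  tsum_nonneg fun j => gQ_nonneg h0 h1 n j

lemma wQ_nonneg {ε : ℝ} (h0 : 0 ≤ ε) (h1 : ε ≤ 1) (n : ℕ) : 0 ≤ wQ ε n :=
  tsum_nonneg fun j => mul_nonneg (by positivity) (gQ_nonneg h0 h1 n j)

lemma uQ_nonneg {ε : ℝ} (h0 : 0 ≤ ε) (h1 : ε ≤ 1) (n : ℕ) : 0 ≤ uQ ε n :=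
  tsum_nonneg fun j => mul_nonneg (by positivity) (gQ_nonneg h0 h1 n j)

/-- Second-moment recursion for the taboo walk. -/
lemma wQ_succ {ε : ℝ} {n : ℕ} (hn : 1 ≤ n) :
    wQ ε (n+1) = wQ ε n - (2*ε - 1) * tQ ε n := by
  have h := gQ_key ε (fun j : ℤ => ((j:ℝ))^2) n
  simp only [Int.cast_zero, ne_eq, OfNat.ofNat_ne_zero, not_false_eq_true, zero_pow,
    zero_mul, sub_zero] at h
  unfold wQ
  rw [h]
  have hpt : ∀ j : ℤ, gQ ε n j * (gR ε j * (((j+1 : ℤ):ℝ))^2 + gL ε j * (((j-1 : ℤ):ℝ))^2)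
      = ((j:ℝ))^2 * gQ ε n j + (1 - 2*ε) * gQ ε n j := by
    intro j
    by_cases hj : j = 0
    · subst hj
      rw [gQ_zero_at_zero ε hn]
      ring
    · have hjr : ((j:ℝ)) ≠ 0 := Int.cast_ne_zero.mpr hj
      have hval : gR ε j * (((j+1 : ℤ):ℝ))^2 + gL ε j * (((j-1 : ℤ):ℝ))^2
          = ((j:ℝ))^2 + (1 - 2*ε) := by
        unfold gR gL
        rw [if_neg hj, if_neg hj]
        push_cast
        field_simp
        ring
      rw [hval]
      ring
  rw [tsum_congr hpt, Summable.tsum_add (gQ_summable ε n _) ?h2, tsum_mul_left]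
  · unfold tQ
    ring
  · exact gQ_summable ε n _

/-- Fourth-moment growth bound for the taboo walk. -/
lemma uQ_succ_le {ε : ℝ} (hhalf : 1/2 < ε) (h1 : ε ≤ 1) {n : ℕ} (hn : 1 ≤ n) :
    uQ ε (n+1) ≤ uQ ε n + 6 * wQ ε n := by
  have h0 : 0 ≤ ε := by linarith
  have h := gQ_key ε (fun j : ℤ => ((j:ℝ))^4) n
  simp only [Int.cast_zero, ne_eq, OfNat.ofNat_ne_zero, not_false_eq_true, zero_pow,
    zero_mul, sub_zero] at h
  unfold uQ
  rw [h]
  have hle : ∀ j : ℤ, gQ ε n j * (gR ε j * (((j+1 : ℤ):ℝ))^4 + gL ε j * (((j-1 : ℤ):ℝ))^4)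
      ≤ ((j:ℝ))^4 * gQ ε n j + 6 * (((j:ℝ))^2 * gQ ε n j) := by
    intro j
    by_cases hj : j = 0
    · subst hj
      rw [gQ_zero_at_zero ε hn]
      norm_num
    · have hjr : ((j:ℝ)) ≠ 0 := Int.cast_ne_zero.mpr hj
      have hval : gR ε j * (((j+1 : ℤ):ℝ))^4 + gL ε j * (((j-1 : ℤ):ℝ))^4
          = ((j:ℝ))^4 + (6 - 4*ε) * ((j:ℝ))^2 + (1 - 4*ε) := by
        unfold gR gL
        rw [if_neg hj, if_neg hj]
        push_cast
        field_simp
        ring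
      rw [hval]
      have hQ : 0 ≤ gQ ε n j := gQ_nonneg h0 h1 n j
      have hsq : (0:ℝ) ≤ ((j:ℝ))^2 := sq_nonneg _
      nlinarith [mul_nonneg hQ hsq, mul_nonneg hQ (mul_nonneg h0 hsq)]
  refine (Summable.tsum_le_tsum hle ?hs1 ?hs2).trans ?hfin
  · have := gQ_summable ε n (fun j => gR ε j * (((j+1 : ℤ):ℝ))^4 + gL ε j * (((j-1 : ℤ):ℝ))^4)
    refine this.congr ?_
    intro j
    ring
  · have := gQ_summable ε n (fun j => ((j:ℝ))^4 + 6 * ((j:ℝ))^2)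
    refine this.congr ?_
    intro j
    ring
  · rw [Summable.tsum_add (gQ_summable ε n _) ?h6]
    · have : ∑' j : ℤ, 6 * (((j:ℝ))^2 * gQ ε n j) = 6 * wQ ε n := by
        rw [tsum_mul_left]
        rfl
      rw [this]
    · have := gQ_summable ε n (fun j => 6 * ((j:ℝ))^2)
      refine this.congr ?_
      intro j
      ring

/-- Cauchy–Schwarz: `W_n² ≤ t_n U_n`. -/
lemma wQ_sq_le {ε : ℝ} (h0 : 0 ≤ ε) (h1 : ε ≤ 1) (n : ℕ) :
    wQ ε n ^ 2 ≤ tQ ε n * uQ ε n := by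
  classical
  set s : Finset ℤ := Finset.Icc (-(n:ℤ)) n with hs
  have hout : ∀ j ∉ s, gQ ε n j = 0 := by
    intro j hj
    rw [hs, Finset.mem_Icc] at hj
    exact gQ_supp ε n j (by omega)
  have ht : tQ ε n = ∑ j ∈ s, gQ ε n j := tsum_eq_sum (by intro j hj; exact hout j hj)
  have hw : wQ ε n = ∑ j ∈ s, ((j:ℝ))^2 * gQ ε n j :=
    tsum_eq_sum (by intro j hj; rw [hout j hj, mul_zero])
  have hu : uQ ε n = ∑ j ∈ s, ((j:ℝ))^4 * gQ ε n j :=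
    tsum_eq_sum (by intro j hj; rw [hout j hj, mul_zero])
  rw [ht, hw, hu]
  have hcs := Finset.sum_mul_sq_le_sq_mul_sq s
    (fun j => Real.sqrt (gQ ε n j)) (fun j => ((j:ℝ))^2 * Real.sqrt (gQ ε n j))
  have e1 : ∀ j ∈ s, Real.sqrt (gQ ε n j) * (((j:ℝ))^2 * Real.sqrt (gQ ε n j))
      = ((j:ℝ))^2 * gQ ε n j := by
    intro j _
    have h' : Real.sqrt (gQ ε n j) * Real.sqrt (gQ ε n j) = gQ ε n j :=
      Real.mul_self_sqrt (gQ_nonneg h0 h1 n j)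
    calc Real.sqrt (gQ ε n j) * (((j:ℝ))^2 * Real.sqrt (gQ ε n j))
        = ((j:ℝ))^2 * (Real.sqrt (gQ ε n j) * Real.sqrt (gQ ε n j)) := by ring
      _ = ((j:ℝ))^2 * gQ ε n j := by rw [h']
  have e2 : ∀ j ∈ s, Real.sqrt (gQ ε n j) ^ 2 = gQ ε n j := by
    intro j _
    exact Real.sq_sqrt (gQ_nonneg h0 h1 n j)
  have e3 : ∀ j ∈ s, (((j:ℝ))^2 * Real.sqrt (gQ ε n j)) ^ 2 = ((j:ℝ))^4 * gQ ε n j := by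
    intro j _
    have h' := Real.sq_sqrt (gQ_nonneg h0 h1 n j)
    rw [mul_pow, h']
    ring
  rw [Finset.sum_congr rfl e1, Finset.sum_congr rfl e2, Finset.sum_congr rfl e3] at hcs
  exact hcs

/-- `W_n ≤ 1` for `n ≥ 1`. -/
lemma wQ_le_one {ε : ℝ} (hhalf : 1/2 < ε) (h1 : ε ≤ 1) : ∀ n, 1 ≤ n → wQ ε n ≤ 1 := by
  have h0 : (0:ℝ) ≤ ε := by linarith
  intro n
  induction n with
  | zero => omega
  | succ n ih =>
    intro _
    rcases Nat.eq_or_lt_of_le (by omega : 1 ≤ n + 1) with h | h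
    · have : n = 0 := by omega
      subst this
      simpa using (wQ_one ε).le
    · have hn : 1 ≤ n := by omega
      rw [wQ_succ hn]
      have := tQ_nonneg h0 h1 n
      have := ih hn
      nlinarith

/-- `U_n ≤ 6 n` for `n ≥ 1`. -/
lemma uQ_le {ε : ℝ} (hhalf : 1/2 < ε) (h1 : ε ≤ 1) : ∀ n, 1 ≤ n → uQ ε n ≤ 6 * n := by
  intro n
  induction n with
  | zero => omega
  | succ n ih =>
    intro _
    rcases Nat.eq_or_lt_of_le (by omega : 1 ≤ n + 1) with h | h
    · have : n = 0 := by omega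
      subst this
      rw [uQ_one]
      norm_num
    · have hn : 1 ≤ n := by omega
      calc uQ ε (n+1) ≤ uQ ε n + 6 * wQ ε n := uQ_succ_le hhalf h1 hn
        _ ≤ 6 * n + 6 * 1 := by
            have := wQ_le_one hhalf h1 n hn
            have := ih hn
            linarith
        _ ≤ 6 * (n+1 : ℕ) := by push_cast; linarith

/-- Partial sums of `t`. -/
lemma sum_tQ {ε : ℝ} (hhalf : 1/2 < ε) (h1 : ε ≤ 1) :
    ∀ N, 1 ≤ N → ∑ m ∈ Finset.range N, tQ ε m = 1 + (1 - wQ ε N)/(2*ε - 1) := by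
  intro N
  induction N with
  | zero => omega
  | succ N ih =>
    intro _
    rcases Nat.eq_or_lt_of_le (by omega : 1 ≤ N + 1) with h | h
    · have : N = 0 := by omega
      subst this
      rw [Finset.sum_range_one, tQ_zero, wQ_one]
      norm_num
    · have hN : 1 ≤ N := by omega
      rw [Finset.sum_range_succ, ih hN, wQ_succ hN]
      have hd : (2*ε - 1) ≠ 0 := by linarith
      field_simp
      ring

/-- Partial sums of `n·F_n` in terms of `t`. -/
lemma sum_nF {ε : ℝ} : ∀ N : ℕ,
    ∑ n ∈ Finset.range (N+1), (n:ℝ) * gF ε n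
      = (∑ m ∈ Finset.range N, tQ ε m) - N * tQ ε N := by
  intro N
  induction N with
  | zero => simp
  | succ N ih =>
    rw [Finset.sum_range_succ, ih, Finset.sum_range_succ, tQ_succ]
    push_cast
    ring

end moments

/-- For `ε ∈ (1/2, 1)` the mean recurrence time of the origin of the Gillis walk is finite
and equals `Σ_{n≥1} n F_n = 2ε/(2ε−1)`. -/
theorem gillis_mean_recurrence_time (ε : ℝ) (hε : ε ∈ Set.Ioo (1 / 2 : ℝ) 1)
    (F : ℕ → ℝ) (hF0 : F 0 = 0)
    (hren : ∀ n : ℕ, 1 ≤ n → gP ε n 0 = ∑ k ∈ Finset.Icc 1 n, F k * gP ε (n - k) 0) :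
    HasSum (fun n : ℕ => (n : ℝ) * F n) (2 * ε / (2 * ε - 1)) := by
  obtain ⟨hhalf, hone⟩ := hε
  have h0 : (0:ℝ) ≤ ε := by linarith
  have h1 : ε ≤ 1 := le_of_lt hone
  have hpos : (0:ℝ) < 2*ε - 1 := by linarith
  have hFg : ∀ n, F n = gF ε n := F_eq_gF ε F hF0 hren
  -- basic properties of t
  have htnn : ∀ n, 0 ≤ tQ ε n := tQ_nonneg h0 h1
  have htmono : ∀ n, tQ ε (n+1) ≤ tQ ε n := by
    intro n
    rw [tQ_succ]
    linarith [gF_nonneg h0 h1 (n+1)]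
  have htanti : Antitone (tQ ε) := antitone_nat_of_succ_le htmono
  -- partial sums of t are bounded
  have hSbound : ∀ N, ∑ m ∈ Finset.range N, tQ ε m ≤ 1 + 1/(2*ε - 1) := by
    intro N
    rcases Nat.eq_zero_or_pos N with rfl | hN
    · simp
      positivity
    · rw [sum_tQ hhalf h1 N hN]
      have hw := wQ_nonneg h0 h1 N
      have h2 : (1 - wQ ε N)/(2*ε - 1) ≤ 1/(2*ε - 1) := by
        gcongr <;> linarith
      linarith
  have hsummable : Summable (tQ ε) := summable_of_sum_range_le htnn hSbound
  set L := ∑' n, tQ ε n with hL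
  have hS : Tendsto (fun N => ∑ m ∈ Finset.range N, tQ ε m) atTop (nhds L) :=
    hsummable.hasSum.tendsto_sum_nat
  have hdiv2 : Tendsto (fun n : ℕ => n / 2) atTop atTop :=
    Filter.tendsto_atTop_atTop.2 (fun b => ⟨2*b, fun a ha => by omega⟩)
  have hS2 : Tendsto (fun N : ℕ => ∑ m ∈ Finset.range (N/2), tQ ε m) atTop (nhds L) :=
    hS.comp hdiv2
  -- N * t_N → 0
  have hb : ∀ n : ℕ, (n:ℝ) * tQ ε n
      ≤ 2 * ((∑ m ∈ Finset.range n, tQ ε m) - ∑ m ∈ Finset.range (n/2), tQ ε m) := by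
    intro n
    have hle : n/2 ≤ n := Nat.div_le_self n 2
    have hIco : (∑ m ∈ Finset.range n, tQ ε m) - ∑ m ∈ Finset.range (n/2), tQ ε m
        = ∑ m ∈ Finset.Ico (n/2) n, tQ ε m := by
      rw [Finset.sum_Ico_eq_sub _ hle]
    have hcard : ((Finset.Ico (n/2) n).card) • tQ ε n ≤ ∑ m ∈ Finset.Ico (n/2) n, tQ ε m := by
      apply Finset.card_nsmul_le_sum
      intro i hi
      rw [Finset.mem_Ico] at hi
      exact htanti (le_of_lt hi.2)
    rw [Nat.card_Ico, nsmul_eq_mul] at hcard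
    rw [hIco]
    have hcast : (n:ℝ) ≤ 2 * ((n - n/2 : ℕ) : ℝ) := by
      have : n ≤ 2 * (n - n/2) := by omega
      exact_mod_cast this
    nlinarith [htnn n, hcard]
  have hnt : Tendsto (fun n : ℕ => (n:ℝ) * tQ ε n) atTop (nhds 0) := by
    apply squeeze_zero (fun n => mul_nonneg (Nat.cast_nonneg n) (htnn n)) hb
    have := (hS.sub hS2).const_mul (2:ℝ)
    simpa using this
  -- W_N → 0
  have hW0 : Tendsto (fun n => wQ ε n) atTop (nhds 0) := by
    have hub : ∀ n : ℕ, 1 ≤ n → wQ ε n ≤ Real.sqrt (6 * ((n:ℝ) * tQ ε n)) := by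
      intro n hn
      have hsq : wQ ε n ^ 2 ≤ 6 * ((n:ℝ) * tQ ε n) := by
        calc wQ ε n ^ 2 ≤ tQ ε n * uQ ε n := wQ_sq_le h0 h1 n
          _ ≤ tQ ε n * (6 * n) := by
              apply mul_le_mul_of_nonneg_left (uQ_le hhalf h1 n hn) (htnn n)
          _ = 6 * ((n:ℝ) * tQ ε n) := by ring
      have := Real.sqrt_le_sqrt hsq
      rwa [Real.sqrt_sq (wQ_nonneg h0 h1 n)] at this
    have hg : Tendsto (fun n : ℕ => Real.sqrt (6 * ((n:ℝ) * tQ ε n))) atTop (nhds 0) := by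
      have h6 : Tendsto (fun n : ℕ => 6 * ((n:ℝ) * tQ ε n)) atTop (nhds 0) := by
        have := hnt.const_mul (6:ℝ)
        simpa using this
      have := (Real.continuous_sqrt.tendsto 0).comp h6
      simpa only [Function.comp_def, Real.sqrt_zero] using this
    apply squeeze_zero' (Filter.Eventually.of_forall (fun n => wQ_nonneg h0 h1 n))
      ?_ hg
    filter_upwards [Filter.eventually_ge_atTop 1] with n hn
    exact hub n hn
  -- limit of partial sums of n F n
  set target : ℝ := 2 * ε / (2 * ε - 1) with htarget
  have hPS : ∀ N : ℕ, ∑ n ∈ Finset.range (N+1), (n:ℝ) * F n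
      = (∑ m ∈ Finset.range N, tQ ε m) - N * tQ ε N := by
    intro N
    rw [← sum_nF]
    apply Finset.sum_congr rfl
    intro n _
    rw [hFg n]
  have hlim1 : Tendsto (fun N : ℕ => ∑ n ∈ Finset.range (N+1), (n:ℝ) * F n) atTop
      (nhds target) := by
    have heq : ∀ᶠ N : ℕ in atTop, 1 + (1 - wQ ε N)/(2*ε - 1) - N * tQ ε N
        = ∑ n ∈ Finset.range (N+1), (n:ℝ) * F n := by
      filter_upwards [Filter.eventually_ge_atTop 1] with N hN
      rw [hPS N, sum_tQ hhalf h1 N hN]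
    have hlim2 : Tendsto (fun N : ℕ => 1 + (1 - wQ ε N)/(2*ε - 1) - N * tQ ε N) atTop
        (nhds target) := by
      have hconst : Tendsto (fun N : ℕ => 1 + (1 - wQ ε N)/(2*ε - 1)) atTop
          (nhds (1 + 1/(2*ε - 1))) := by
        have hw : Tendsto (fun N : ℕ => (1 - wQ ε N)/(2*ε - 1)) atTop
            (nhds ((1 - 0)/(2*ε - 1))) := (tendsto_const_nhds.sub hW0).div_const _
        have hc : Tendsto (fun N : ℕ => 1 + (1 - wQ ε N)/(2*ε - 1)) atTop
            (nhds (1 + (1 - 0)/(2*ε - 1))) := tendsto_const_nhds.add hw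
        simpa using hc
      have := hconst.sub hnt
      have htv : 1 + 1/(2*ε - 1) - 0 = target := by
        rw [htarget]
        field_simp
        ring
      rwa [htv] at this
    exact Tendsto.congr' heq hlim2
  have hlim : Tendsto (fun N : ℕ => ∑ n ∈ Finset.range N, (n:ℝ) * F n) atTop
      (nhds target) := by
    rw [← tendsto_add_atTop_iff_nat 1]
    exact hlim1
  -- nonnegativity and summability
  have hfnn : ∀ n : ℕ, 0 ≤ (n:ℝ) * F n := by
    intro n
    rw [hFg n]
    exact mul_nonneg (Nat.cast_nonneg n) (gF_nonneg h0 h1 n)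
  have htarget_nn : 0 ≤ target := by
    rw [htarget]
    positivity
  have hbound : ∀ N : ℕ, ∑ n ∈ Finset.range N, (n:ℝ) * F n ≤ 1 + 1/(2*ε - 1) := by
    intro N
    rcases Nat.eq_zero_or_pos N with rfl | hN
    · simp
      positivity
    · obtain ⟨M, rfl⟩ : ∃ M, N = M + 1 := ⟨N - 1, by omega⟩
      rw [hPS M]
      have h2 := hSbound M
      have h3 : 0 ≤ (M:ℝ) * tQ ε M := mul_nonneg (Nat.cast_nonneg M) (htnn M)
      linarith
  have hsumF : Summable (fun n : ℕ => (n:ℝ) * F n) := summable_of_sum_range_le hfnn hbound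
  have hts : Tendsto (fun N : ℕ => ∑ n ∈ Finset.range N, (n:ℝ) * F n) atTop
      (nhds (∑' n : ℕ, (n:ℝ) * F n)) := hsumF.hasSum.tendsto_sum_nat
  have : (∑' n : ℕ, (n:ℝ) * F n) = target := tendsto_nhds_unique hts hlim
  rw [← this]
  exact hsumF.hasSum
end

section
/- For every ε ∈ (1/2, 1), the Gillis random walk admits a stationary probability distribution, given explicitly by the symmetric sequence π with π_0 = (2ε−1)/(2ε), π_j = π_{−j} = π_0 · j (1−ε)_{j−1} / (1+ε)_j for j ≥ 1. That is: Σ_{j∈ℤ} π_j = 1 and π_j = R(j−1) π_{j−1} + L(j+1) π_{j+1} for every j ∈ ℤ. -/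
/-- Pochhammer symbol `(x)ₙ = x (x+1) ⋯ (x+n-1)`. -/
noncomputable def poch (x : ℝ) (n : ℕ) : ℝ := ∏ i ∈ Finset.range n, (x + i)

/-- The candidate stationary distribution of the Gillis walk:
`π 0 = (2ε−1)/(2ε)` and `π j = π (−j) = π 0 · |j| (1−ε)_{|j|−1} / (1+ε)_{|j|}`. -/
noncomputable def gPi (ε : ℝ) (j : ℤ) : ℝ :=
  if j = 0 then (2 * ε - 1) / (2 * ε)
  else (2 * ε - 1) / (2 * ε) *
    ((j.natAbs : ℝ) * poch (1 - ε) (j.natAbs - 1) / poch (1 + ε) j.natAbs)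

set_option linter.unusedSectionVars false

lemma poch_zero (x : ℝ) : poch x 0 = 1 := by simp [poch]

lemma poch_succ (x : ℝ) (n : ℕ) : poch x (n+1) = poch x n * (x + n) := by
  simp [poch, Finset.prod_range_succ]

lemma poch_pos {x : ℝ} (hx : 0 < x) (n : ℕ) : 0 < poch x n := by
  apply Finset.prod_pos; intro i _; positivity

lemma gPi_neg (ε : ℝ) (j : ℤ) : gPi ε (-j) = gPi ε j := by
  simp [gPi, neg_eq_zero, Int.natAbs_neg]

lemma gR_neg (ε : ℝ) (j : ℤ) : gR ε (-j) = gL ε j := by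
  rcases eq_or_ne j 0 with rfl | h
  · simp [gR, gL]
  · rw [gR, gL, if_neg (by simpa using h), if_neg h]
    push_cast
    rw [div_neg]
    ring

lemma gL_neg (ε : ℝ) (j : ℤ) : gL ε (-j) = gR ε j := by
  have := gR_neg ε (-j); rw [neg_neg] at this; exact this.symm

lemma gPi_nat (ε : ℝ) (n : ℕ) : gPi ε ((n:ℤ)+1) =
    (2 * ε - 1) / (2 * ε) * (((n:ℝ)+1) * poch (1 - ε) n / poch (1 + ε) (n+1)) := by
  have h0 : ((n:ℤ)+1) ≠ 0 := by omega
  have hab : ((n:ℤ)+1).natAbs = n+1 := by omega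
  rw [gPi, if_neg h0, hab]
  push_cast
  norm_num

lemma gR_nat (ε : ℝ) (n : ℕ) : gR ε ((n:ℤ)+1) = (1 - ε / ((n:ℝ)+1)) / 2 := by
  rw [gR, if_neg (by omega)]
  push_cast
  ring_nf

lemma gL_nat (ε : ℝ) (n : ℕ) : gL ε ((n:ℤ)+1) = (1 + ε / ((n:ℝ)+1)) / 2 := by
  rw [gL, if_neg (by omega)]
  push_cast
  ring_nf


noncomputable def gb (ε : ℝ) (n : ℕ) : ℝ := poch (1 - ε) n / poch (1 + ε) n

noncomputable def gd (ε : ℝ) (n : ℕ) : ℝ := ((n : ℝ) + ε) / (2 * ε - 1) * gb ε n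

section walk
variable {ε : ℝ} (h1 : 1 / 2 < ε) (h2 : ε < 1)

include h1 h2

lemma gb_pos (n : ℕ) : 0 < gb ε n := by
  have : (0:ℝ) < 1 - ε := by linarith
  have : (0:ℝ) < 1 + ε := by linarith
  exact div_pos (poch_pos (by linarith) n) (poch_pos (by linarith) n)

lemma gd_pos (n : ℕ) : 0 < gd ε n := by
  have hb := gb_pos h1 h2 n
  have : (0:ℝ) < 2 * ε - 1 := by linarith
  have : (0:ℝ) < (n:ℝ) + ε := by positivity
  exact mul_pos (by positivity) hb

lemma gb_succ (n : ℕ) : gb ε (n+1) = gb ε n * (((n:ℝ) + 1 - ε) / ((n:ℝ) + 1 + ε)) := by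
  have hq : poch (1 + ε) n ≠ 0 := (poch_pos (by linarith) n).ne'
  have hq2 : (n:ℝ) + 1 + ε ≠ 0 := by positivity
  rw [gb, gb, poch_succ, poch_succ]
  field_simp
  ring

lemma gd_sub (n : ℕ) : gd ε n - gd ε (n+1) = gb ε n := by
  have h2e : (2 * ε - 1 : ℝ) ≠ 0 := by intro h; nlinarith
  have hq2 : (n:ℝ) + 1 + ε ≠ 0 := by positivity
  rw [gd, gd, gb_succ h1 h2]
  push_cast
  field_simp
  linear_combination (gb ε n) * (mul_inv_cancel₀ h2e)

lemma sum_range_gb (N : ℕ) : ∑ i ∈ Finset.range N, gb ε i = gd ε 0 - gd ε N := by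
  induction N with
  | zero => simp
  | succ n ih => rw [Finset.sum_range_succ, ih, ← gd_sub h1 h2 n]; ring

lemma summable_gb : Summable (gb ε) := by
  apply summable_of_sum_range_le (c := gd ε 0) (fun n => (gb_pos h1 h2 n).le)
  intro n
  rw [sum_range_gb h1 h2]
  have := gd_pos h1 h2 n
  linarith

lemma gd_tendsto : Filter.Tendsto (gd ε) Filter.atTop (nhds 0) := by
  have hanti : Antitone (gd ε) := antitone_nat_of_succ_le (fun n => by
    have := gd_sub h1 h2 n
    have := (gb_pos h1 h2 n).le
    linarith)
  have hbdd : BddBelow (Set.range (gd ε)) :=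
    ⟨0, by rintro _ ⟨n, rfl⟩; exact (gd_pos h1 h2 n).le⟩
  have hT := tendsto_atTop_ciInf hanti hbdd
  set L := ⨅ n, gd ε n with hL
  have hL0 : 0 ≤ L := le_ciInf (fun n => (gd_pos h1 h2 n).le)
  have hLd : ∀ n, L ≤ gd ε n := fun n => ciInf_le hbdd n
  rcases eq_or_lt_of_le hL0 with h | h
  · rwa [← h] at hT
  · exfalso
    have hns : ¬ Summable (fun n : ℕ => (2 * ε - 1) * L / ((n : ℝ) + ε)) := by
      intro hs
      have h2e : (0:ℝ) < 2 * ε - 1 := by linarith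
      have : Summable (fun n : ℕ => ((n : ℝ) + ε)⁻¹) := by
        have := hs.mul_left (((2 * ε - 1) * L)⁻¹)
        have hL' : (2 * ε - 1) * L ≠ 0 := by positivity
        have hf : (fun n : ℕ => ((n : ℝ) + ε)⁻¹) =
            fun n : ℕ => ((2 * ε - 1) * L)⁻¹ * ((2 * ε - 1) * L / ((n : ℝ) + ε)) := by
          funext n
          rw [div_eq_mul_inv, inv_mul_cancel_left₀ hL']
        rw [hf]; exact this
      have hcmp : Summable (fun n : ℕ => ((n : ℝ) + 1)⁻¹) := by
        apply this.of_nonneg_of_le (fun n => by positivity)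
        intro n
        apply inv_anti₀ (by positivity) (by linarith)
      have := (summable_nat_add_iff (f := fun n : ℕ => ((n:ℝ))⁻¹) 1).mp (by push_cast; exact hcmp)
      exact Real.not_summable_natCast_inv this
    apply hns
    apply Summable.of_nonneg_of_le (f := gb ε) ?_ ?_ (summable_gb h1 h2)
    · intro n
      have h2e : (0:ℝ) < 2 * ε - 1 := by linarith
      positivity
    · intro n
      have hgb : gb ε n = (2 * ε - 1) * gd ε n / ((n:ℝ) + ε) := by
        rw [gd]
        have h2e : (2 * ε - 1 : ℝ) ≠ 0 := by intro h; nlinarith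
        have : ((n:ℝ) + ε) ≠ 0 := by positivity
        field_simp
      rw [hgb]
      have h2e : (0:ℝ) < 2 * ε - 1 := by linarith
      have hne : (0:ℝ) < (n:ℝ) + ε := by positivity
      gcongr
      exact hLd n

lemma hasSum_gb : HasSum (gb ε) (gd ε 0) := by
  have hs := (summable_gb h1 h2).hasSum
  have ht := hs.tendsto_sum_nat
  have ht2 : Filter.Tendsto (fun N => ∑ i ∈ Finset.range N, gb ε i) Filter.atTop (nhds (gd ε 0)) := by
    simp_rw [sum_range_gb h1 h2]
    simpa using Filter.Tendsto.const_sub (gd ε 0) (gd_tendsto h1 h2)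
  rwa [tendsto_nhds_unique ht ht2] at hs


lemma gPi_gb (n : ℕ) : gPi ε ((n:ℤ)+1) =
    (2 * ε - 1) / (4 * ε) * (gb ε n + gb ε (n+1)) := by
  rw [gPi_nat, gb, gb, poch_succ, poch_succ]
  have hq : poch (1 + ε) n ≠ 0 := (poch_pos (by linarith) n).ne'
  have hq1 : (1 + ε + (n:ℝ)) ≠ 0 := by positivity
  have he : (ε:ℝ) ≠ 0 := by positivity
  field_simp
  ring

lemma hasSum_pos : HasSum (fun n : ℕ => gPi ε ((n:ℤ)+1)) (1 / (4 * ε)) := by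
  have hb0 : gb ε 0 = 1 := by simp [gb, poch]
  have hshift : HasSum (fun n => gb ε (n+1)) (gd ε 0 - 1) := by
    have := (hasSum_nat_add_iff' (f := gb ε) 1).mpr (hasSum_gb h1 h2)
    simpa [hb0] using this
  have hsum := ((hasSum_gb h1 h2).add hshift).mul_left ((2 * ε - 1) / (4 * ε))
  have hval : (2 * ε - 1) / (4 * ε) * (gd ε 0 + (gd ε 0 - 1)) = 1 / (4 * ε) := by
    rw [gd]
    have hb0' : gb ε 0 = 1 := hb0
    rw [hb0']
    have : (2 * ε - 1 : ℝ) ≠ 0 := by intro h; nlinarith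
    have he : (ε:ℝ) ≠ 0 := by positivity
    push_cast
    field_simp
    ring
  rw [hval] at hsum
  have hf : (fun n : ℕ => gPi ε ((n:ℤ)+1)) =
      fun i : ℕ => (2 * ε - 1) / (4 * ε) * (gb ε i + gb ε (i + 1)) :=
    funext (fun n => gPi_gb h1 h2 n)
  rw [hf]; exact hsum

lemma hasSum_gPi : HasSum (fun j : ℤ => gPi ε j) 1 := by
  have he : (ε:ℝ) ≠ 0 := by positivity
  have key := hasSum_pos h1 h2
  have key' : HasSum (fun n : ℕ => gPi ε ((n+1 : ℕ):ℤ)) (1 / (4 * ε)) := by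
    have : (fun n : ℕ => gPi ε ((n+1 : ℕ):ℤ)) = fun n : ℕ => gPi ε ((n:ℤ)+1) := by
      funext n; push_cast; ring_nf
    rw [this]; exact key
  have hA : HasSum (fun n : ℕ => gPi ε (n:ℤ)) (1 / (4 * ε) + (2 * ε - 1) / (2 * ε)) := by
    apply (hasSum_nat_add_iff' (f := fun n : ℕ => gPi ε (n:ℤ)) 1).mp
    have h0 : gPi ε ((0:ℕ):ℤ) = (2 * ε - 1) / (2 * ε) := by simp [gPi]
    rw [Finset.sum_range_one, h0]
    have : (1 / (4 * ε) + (2 * ε - 1) / (2 * ε)) - (2 * ε - 1) / (2 * ε) = 1 / (4 * ε) := by ring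
    rw [this]; exact key'
  have hB : HasSum (fun n : ℕ => gPi ε (-((n:ℤ)+1))) (1 / (4 * ε)) := by
    have : (fun n : ℕ => gPi ε (-((n:ℤ)+1))) = fun n : ℕ => gPi ε ((n:ℤ)+1) := by
      funext n; exact gPi_neg ε _
    rw [this]; exact key
  have := hA.of_nat_of_neg_add_one hB
  convert this using 1
  field_simp
  ring


lemma key0 : gPi ε (0:ℤ) = gR ε (0-1) * gPi ε (0-1) + gL ε (0+1) * gPi ε (0+1) := by
  have he : (ε:ℝ) ≠ 0 := by positivity
  have h1e : (1:ℝ) + ε ≠ 0 := by positivity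
  norm_num [gPi, gR, gL, poch, Finset.prod_range_one]
  field_simp
  ring

lemma key1 : gPi ε (1:ℤ) = gR ε (1-1) * gPi ε (1-1) + gL ε (1+1) * gPi ε (1+1) := by
  have he : (ε:ℝ) ≠ 0 := by positivity
  have h1e : (1:ℝ) + ε ≠ 0 := by positivity
  have h2e : (2:ℝ) + ε ≠ 0 := by positivity
  norm_num [gPi, gR, gL, poch, Finset.prod_range_succ, Finset.prod_range_one]
  field_simp
  ring

lemma key2 (n : ℕ) : gPi ε ((n:ℤ)+2) =
    gR ε ((n:ℤ)+1) * gPi ε ((n:ℤ)+1) + gL ε ((n:ℤ)+3) * gPi ε ((n:ℤ)+3) := by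
  have he : (ε:ℝ) ≠ 0 := by positivity
  have e1 := gPi_nat ε n
  have e2 : gPi ε ((n:ℤ)+2) = (2 * ε - 1) / (2 * ε) *
      (((n:ℝ)+1+1) * poch (1 - ε) (n+1) / poch (1 + ε) (n+2)) := by
    have h := gPi_nat ε (n+1)
    push_cast at h
    rw [show ((n:ℤ)+2) = (n:ℤ)+1+1 by ring]
    exact h
  have e3 : gPi ε ((n:ℤ)+3) = (2 * ε - 1) / (2 * ε) *
      (((n:ℝ)+2+1) * poch (1 - ε) (n+2) / poch (1 + ε) (n+3)) := by
    have h := gPi_nat ε (n+2)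
    push_cast at h
    rw [show ((n:ℤ)+3) = (n:ℤ)+2+1 by ring]
    exact h
  have r := gR_nat ε n
  have l : gL ε ((n:ℤ)+3) = (1 + ε / ((n:ℝ)+2+1)) / 2 := by
    have h := gL_nat ε (n+2)
    push_cast at h
    rw [show ((n:ℤ)+3) = (n:ℤ)+2+1 by ring]
    exact h
  rw [e1, e2, e3, r, l]
  rw [poch_succ (1-ε) (n+1), poch_succ (1-ε) n,
      poch_succ (1+ε) (n+2), poch_succ (1+ε) (n+1), poch_succ (1+ε) n]
  have hq : poch (1 + ε) n ≠ 0 := (poch_pos (by linarith) n).ne'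
  have c1 : (1:ℝ) + ε + n ≠ 0 := by positivity
  have c2 : (1:ℝ) + ε + ((n:ℝ)+1) ≠ 0 := by positivity
  have c3 : (1:ℝ) + ε + ((n:ℝ)+2) ≠ 0 := by positivity
  have c4 : ((n:ℝ)+1) ≠ 0 := by positivity
  have c5 : ((n:ℝ)+3) ≠ 0 := by positivity
  push_cast
  field_simp
  ring

lemma keyN (n : ℕ) : gPi ε (n:ℤ) = gR ε ((n:ℤ)-1) * gPi ε ((n:ℤ)-1)
    + gL ε ((n:ℤ)+1) * gPi ε ((n:ℤ)+1) := by
  match n with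
  | 0 => exact_mod_cast key0 h1 h2
  | 1 => exact_mod_cast key1 h1 h2
  | (n+2) =>
    have := key2 h1 h2 n
    have hc : ((n+2:ℕ):ℤ) = (n:ℤ)+2 := by push_cast; ring
    rw [hc, show ((n:ℤ)+2-1) = (n:ℤ)+1 by ring, show ((n:ℤ)+2+1) = (n:ℤ)+3 by ring]
    exact this

lemma recur (j : ℤ) : gPi ε j = gR ε (j-1) * gPi ε (j-1) + gL ε (j+1) * gPi ε (j+1) := by
  obtain ⟨n, rfl | rfl⟩ := j.eq_nat_or_neg
  · exact keyN h1 h2 n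
  · rw [show (-(n:ℤ)-1) = -((n:ℤ)+1) by ring, show (-(n:ℤ)+1) = -((n:ℤ)-1) by ring,
        gPi_neg, gPi_neg, gPi_neg, gR_neg, gL_neg]
    rw [keyN h1 h2 n]
    ring

end walk

/-- For `ε ∈ (1/2, 1)` the Gillis random walk admits the stationary probability
distribution `gPi ε`: it is symmetric, sums to `1`, and is invariant under the walk. -/
theorem gillis_stationary_distribution (ε : ℝ) (hε : ε ∈ Set.Ioo (1 / 2 : ℝ) 1) :
    (∀ j : ℤ, gPi ε j = gPi ε (-j)) ∧
    HasSum (fun j : ℤ => gPi ε j) 1 ∧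
    (∀ j : ℤ, gPi ε j = gR ε (j - 1) * gPi ε (j - 1) + gL ε (j + 1) * gPi ε (j + 1)) := by
  obtain ⟨h1, h2⟩ := hε
  exact ⟨fun j => (gPi_neg ε j).symm, hasSum_gPi h1 h2, fun j => recur h1 h2 j⟩
end

section
/- (Lamperti recurrence criterion.) Let (X_n)_{n≥0} be a time-homogeneous Markov chain on [0,∞) with uniformly bounded increments (there is B < ∞ with |X_{n+1} − X_n| ≤ B almost surely), and let μ_k(x) = E[(X_{n+1} − X_n)^k | X_n = x]. Suppose μ_2 is bounded away from 0 (there is δ > 0 with μ_2(x) ≥ δ for all x), and suppose there exist θ < 1 and r > 0 such that μ_1(x) ≤ θ μ_2(x)/(2x) for all x ≥ r. Then the chain is recurrent: almost surely liminf_{n→∞} X_n < ∞. -/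
open MeasureTheory ProbabilityTheory Filter

/-- The `k`-th moment of the increment of a Markov kernel at the point `x`:
`μ_k(x) = ∫ (y − x)^k κ(x, dy)`. -/
noncomputable def mom (κ : Kernel ℝ ℝ) (k : ℕ) (x : ℝ) : ℝ := ∫ y, (y - x) ^ k ∂(κ x)

/-- `μ` is a trajectory (Ionescu–Tulcea) measure on path space `ℝ^ℕ` for the transition
kernel `κ`: for every `n`, conditionally on the first `n+1` coordinates, the `(n+1)`-st
coordinate is distributed according to `κ` applied to the `n`-th coordinate. -/
def IsMarkovTrajectory (κ : Kernel ℝ ℝ) (μ : Measure (ℕ → ℝ)) : Prop :=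
  ∀ (n : ℕ) (s : Set ℝ), MeasurableSet s →
    ∀ t : Set (ℕ → ℝ),
      MeasurableSet[MeasurableSpace.comap (fun (ω : ℕ → ℝ) (i : Fin (n + 1)) => ω i)
        inferInstance] t →
      μ (t ∩ {ω | ω (n + 1) ∈ s}) = ∫⁻ ω in t, κ (ω n) s ∂μ

section Aux

open scoped ENNReal

lemma taylor_log_aux {x B y : ℝ} (hB : 0 ≤ B) (hx : B + 1 ≤ x) (hy : |y - x| ≤ B) :
    Real.log y ≤ Real.log x + (y - x) / x - (y - x) ^ 2 / (2 * (x + B) ^ 2) := by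
  set c := x + B with hc
  have hx0 : (0:ℝ) < x := by linarith
  have hc0 : (0:ℝ) < c := by rw [hc]; linarith
  have hxc : x ≤ c := by rw [hc]; linarith
  have hy1 : x - B ≤ y := by cases abs_le.1 hy; linarith
  have hy2 : y ≤ c := by rw [hc]; cases abs_le.1 hy; linarith
  have hxB1 : (1:ℝ) ≤ x - B := by linarith
  set φ : ℝ → ℝ := fun t => Real.log x + (t - x) / x - (t - x) ^ 2 / (2 * c ^ 2) - Real.log t
    with hφ
  have hderiv : ∀ t : ℝ, 1 ≤ t →
      HasDerivAt φ ((t - x) * (c ^ 2 - x * t) / (x * t * c ^ 2)) t := by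
    intro t ht
    have ht0 : t ≠ 0 := by linarith
    have h1 : HasDerivAt (fun t : ℝ => Real.log x + (t - x) / x) (1 / x) t := by
      simpa using (((hasDerivAt_id t).sub_const x).div_const x).const_add (Real.log x)
    have h2 : HasDerivAt (fun t : ℝ => (t - x) ^ 2 / (2 * c ^ 2))
        ((2 * (t - x)) / (2 * c ^ 2)) t := by
      have := (((hasDerivAt_id t).sub_const x).pow 2).div_const (2 * c ^ 2)
      simpa using this
    have h3 : HasDerivAt Real.log t⁻¹ t := Real.hasDerivAt_log ht0
    have := (h1.sub h2).sub h3
    convert this using 1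
    · rfl
    · rfl
    · rfl
    have hx0' : x ≠ 0 := ne_of_gt hx0
    have hc0' : c ≠ 0 := ne_of_gt hc0
    field_simp
    ring
  have hfacts : ∀ t : ℝ, 1 ≤ t → t ≤ c → 0 < x * t * c ^ 2 ∧ (0:ℝ) ≤ c ^ 2 - x * t := by
    intro t h1 h2
    have h0t : (0:ℝ) < t := by linarith
    constructor
    · positivity
    · nlinarith [mul_le_mul hxc h2 (le_of_lt h0t) (le_of_lt hc0)]
  have hanti : AntitoneOn φ (Set.Icc (x - B) x) := by
    apply antitoneOn_of_deriv_nonpos (convex_Icc _ _)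
    · intro t ht
      exact (hderiv t (le_trans hxB1 ht.1)).continuousAt.continuousWithinAt
    · intro t ht
      rw [interior_Icc] at ht
      exact (hderiv t (by linarith [ht.1])).differentiableAt.differentiableWithinAt
    · intro t ht
      rw [interior_Icc] at ht
      obtain ⟨hp, hq⟩ := hfacts t (by linarith [ht.1]) (by linarith [ht.2])
      rw [(hderiv t (by linarith [ht.1])).deriv]
      apply div_nonpos_of_nonpos_of_nonneg _ (le_of_lt hp)
      nlinarith [ht.2]
  have hmono : MonotoneOn φ (Set.Icc x c) := by
    apply monotoneOn_of_deriv_nonneg (convex_Icc _ _)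
    · intro t ht
      exact (hderiv t (by linarith [ht.1])).continuousAt.continuousWithinAt
    · intro t ht
      rw [interior_Icc] at ht
      exact (hderiv t (by linarith [ht.1])).differentiableAt.differentiableWithinAt
    · intro t ht
      rw [interior_Icc] at ht
      obtain ⟨hp, hq⟩ := hfacts t (by linarith [ht.1]) (le_of_lt ht.2)
      rw [(hderiv t (by linarith [ht.1])).deriv]
      apply div_nonneg _ (le_of_lt hp)
      nlinarith [ht.1]
  have hφx : φ x = 0 := by simp [hφ]
  have key : 0 ≤ φ y := by
    rcases le_total y x with h | h
    · have := hanti ⟨hy1, h⟩ ⟨by linarith, le_refl x⟩ h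
      rw [hφx] at this; linarith
    · have := hmono ⟨le_refl x, hxc⟩ ⟨h, hy2⟩ h
      rw [hφx] at this; linarith
  simp only [hφ] at key
  linarith

/-- key one-step drift inequality in `ℝ≥0∞` form -/
lemma drift_step_aux (κ : Kernel ℝ ℝ) [IsMarkovKernel κ]
    {B δ θ x : ℝ} (hB0 : 0 ≤ B)
    (hBx : ∀ᵐ y ∂(κ x), |y - x| ≤ B)
    (hδ : 0 < δ) (hμ2 : δ ≤ mom κ 2 x)
    (hdrift : mom κ 1 x ≤ θ * mom κ 2 x / (2 * x))
    (hx1 : B + 1 ≤ x) (hx3 : θ * (x + B) ^ 2 ≤ x ^ 2) :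
    ∫⁻ y, ENNReal.ofReal (Real.log (max y 1)) ∂(κ x)
      ≤ ENNReal.ofReal (Real.log (max x 1)) := by
  set c := x + B with hc
  have hx0 : (0:ℝ) < x := by linarith
  have hc0 : (0:ℝ) < c := by rw [hc]; linarith
  have hae : ∀ᵐ y ∂(κ x), 1 ≤ y ∧ y ≤ c := by
    filter_upwards [hBx] with y hy
    rcases abs_le.1 hy with ⟨h1, h2⟩
    exact ⟨by linarith, by rw [hc]; linarith⟩
  have hmeas_log : Measurable fun y : ℝ => Real.log (max y 1) :=
    Real.measurable_log.comp (measurable_id.max measurable_const)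
  have hint_log : Integrable (fun y : ℝ => Real.log (max y 1)) (κ x) := by
    apply Integrable.mono' (integrable_const (Real.log c)) hmeas_log.aestronglyMeasurable
    filter_upwards [hae] with y hy
    obtain ⟨h1, h2⟩ := hy
    rw [max_eq_left h1, Real.norm_eq_abs, abs_of_nonneg (Real.log_nonneg h1)]
    exact Real.log_le_log (by linarith) h2
  have hint1 : Integrable (fun y : ℝ => y - x) (κ x) := by
    apply Integrable.mono' (integrable_const B)
      ((measurable_id.sub measurable_const).aestronglyMeasurable)
    filter_upwards [hBx] with y hy
    simpa using hy
  have hint2 : Integrable (fun y : ℝ => (y - x) ^ 2) (κ x) := by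
    apply Integrable.mono' (integrable_const (B ^ 2))
      (((measurable_id.sub measurable_const).pow_const 2).aestronglyMeasurable)
    filter_upwards [hBx] with y hy
    rw [Real.norm_eq_abs, abs_of_nonneg (sq_nonneg _)]
    calc (y - x) ^ 2 = |y - x| ^ 2 := (sq_abs _).symm
    _ ≤ B ^ 2 := by nlinarith [abs_nonneg (y - x)]
  have hintRHS : Integrable
      (fun y : ℝ => Real.log x + (y - x) / x - (y - x) ^ 2 / (2 * c ^ 2)) (κ x) :=
    ((integrable_const (Real.log x)).add (hint1.div_const x)).sub (hint2.div_const _)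
  have hcomp : (fun y : ℝ => Real.log (max y 1)) ≤ᵐ[κ x]
      fun y => Real.log x + (y - x) / x - (y - x) ^ 2 / (2 * c ^ 2) := by
    filter_upwards [hBx, hae] with y hy hy'
    rw [max_eq_left hy'.1, hc]
    exact taylor_log_aux hB0 hx1 hy
  have hreal : ∫ y, Real.log (max y 1) ∂(κ x) ≤ Real.log x := by
    calc ∫ y, Real.log (max y 1) ∂(κ x)
        ≤ ∫ y, (Real.log x + (y - x) / x - (y - x) ^ 2 / (2 * c ^ 2)) ∂(κ x) :=
          integral_mono_ae hint_log hintRHS hcomp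
      _ = Real.log x + (mom κ 1 x) / x - (mom κ 2 x) / (2 * c ^ 2) := by
          rw [integral_sub (by exact (integrable_const _).add (hint1.div_const x)) (hint2.div_const _),
            integral_add (integrable_const _) (hint1.div_const x),
            integral_const, integral_div, integral_div]
          simp [mom]
      _ ≤ Real.log x := by
          have hμ2pos : 0 < mom κ 2 x := lt_of_lt_of_le hδ hμ2
          have h1 : mom κ 1 x / x ≤ θ * mom κ 2 x / (2 * x ^ 2) := by
            rw [div_le_div_iff₀ hx0 (by positivity)]
            calc mom κ 1 x * (2 * x ^ 2) = (mom κ 1 x) * (2 * x) * x := by ring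
              _ ≤ (θ * mom κ 2 x / (2 * x)) * (2 * x) * x := by
                  apply mul_le_mul_of_nonneg_right _ (le_of_lt hx0)
                  exact mul_le_mul_of_nonneg_right hdrift (by positivity)
              _ = θ * mom κ 2 x * x := by field_simp
          have h2 : θ * mom κ 2 x / (2 * x ^ 2) ≤ mom κ 2 x / (2 * c ^ 2) := by
            rw [div_le_div_iff₀ (by positivity) (by positivity)]
            nlinarith [hx3, hμ2pos]
          linarith
  calc ∫⁻ y, ENNReal.ofReal (Real.log (max y 1)) ∂(κ x)
      = ENNReal.ofReal (∫ y, Real.log (max y 1) ∂(κ x)) :=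
        (ofReal_integral_eq_lintegral_ofReal hint_log
          (Filter.Eventually.of_forall fun y => Real.log_nonneg (le_max_right y 1))).symm
    _ ≤ ENNReal.ofReal (Real.log (max x 1)) := by
        apply ENNReal.ofReal_le_ofReal
        rwa [max_eq_left (by linarith)]

lemma kernel_lint_meas_aux (κ : Kernel ℝ ℝ) [IsMarkovKernel κ] (g : ℝ → ℝ≥0∞)
    (hg : Measurable g) : Measurable fun x : ℝ => ∫⁻ y, g y ∂(κ x) := by
  exact Measurable.lintegral_kernel_prod_right (f := fun _ y => g y) (hg.comp measurable_snd)

lemma kernel_step_aux (κ : Kernel ℝ ℝ) [IsMarkovKernel κ] (μ : Measure (ℕ → ℝ))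
    (htraj : IsMarkovTrajectory κ μ) (n : ℕ) (t : Set (ℕ → ℝ))
    (ht : MeasurableSet[MeasurableSpace.comap
      (fun (ω : ℕ → ℝ) (i : Fin (n + 1)) => ω i) inferInstance] t)
    (F : ℝ → ℝ≥0∞) (hF : Measurable F) :
    ∫⁻ ω in t, F (ω (n + 1)) ∂μ = ∫⁻ ω in t, ∫⁻ y, F y ∂(κ (ω n)) ∂μ := by
  have hevn1 : Measurable fun ω : ℕ → ℝ => ω (n + 1) := measurable_pi_apply _
  have hevn : Measurable fun ω : ℕ → ℝ => ω n := measurable_pi_apply _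
  refine Measurable.ennreal_induction
    (motive := fun F => ∫⁻ ω in t, F (ω (n + 1)) ∂μ = ∫⁻ ω in t, ∫⁻ y, F y ∂(κ (ω n)) ∂μ)
    ?_ ?_ ?_ hF
  · intro c s hs
    have h1 : (fun ω : ℕ → ℝ => (s.indicator (fun _ => c)) (ω (n + 1)))
        = ((fun ω : ℕ → ℝ => ω (n + 1)) ⁻¹' s).indicator (fun _ => c) := by
      ext ω
      by_cases h : ω (n + 1) ∈ s <;> simp [Set.indicator_apply, h]
    rw [h1, lintegral_indicator (hevn1 hs)]
    rw [Measure.restrict_restrict (hevn1 hs), setLIntegral_const]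
    have h2 : ∀ x : ℝ, ∫⁻ y, (s.indicator (fun _ => c)) y ∂(κ x) = c * κ x s := by
      intro x
      rw [lintegral_indicator hs, setLIntegral_const]
    simp_rw [h2]
    have hm : Measurable fun ω : ℕ → ℝ => (κ (ω n)) s := by
      exact (Kernel.measurable_coe κ hs).comp (measurable_pi_apply n)
    rw [lintegral_const_mul c hm]
    congr 1
    rw [← htraj n s hs t ht]
    congr 1
    exact Set.inter_comm _ _
  · intro f g _hdisj hf hg hPf hPg
    have hkf : Measurable fun ω : ℕ → ℝ => ∫⁻ y, f y ∂(κ (ω n)) := by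
      exact (kernel_lint_meas_aux κ f hf).comp hevn
    have hf1 : Measurable fun ω : ℕ → ℝ => f (ω (n + 1)) := by exact hf.comp hevn1
    simp only [Pi.add_apply]
    rw [lintegral_add_left hf1, hPf, hPg]
    have h3 : ∀ ω : ℕ → ℝ, ∫⁻ y, (f y + g y) ∂(κ (ω n)) =
        (∫⁻ y, f y ∂(κ (ω n))) + ∫⁻ y, g y ∂(κ (ω n)) := fun ω =>
      lintegral_add_left hf _
    simp_rw [h3]
    rw [lintegral_add_left hkf]
  · intro f hf hmono hPf
    have hm1 : ∀ i, Measurable fun ω : ℕ → ℝ => f i (ω (n + 1)) := fun i => by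
      exact (hf i).comp hevn1
    have hmono1 : Monotone fun (i : ℕ) (ω : ℕ → ℝ) => f i (ω (n + 1)) :=
      fun i j hij ω => hmono hij _
    have hm2 : ∀ i, Measurable fun ω : ℕ → ℝ => ∫⁻ y, f i y ∂(κ (ω n)) := fun i => by
      exact (kernel_lint_meas_aux κ (f i) (hf i)).comp hevn
    have hmono2 : Monotone fun (i : ℕ) (ω : ℕ → ℝ) => ∫⁻ y, f i y ∂(κ (ω n)) :=
      fun i j hij ω => lintegral_mono fun y => hmono hij y
    calc ∫⁻ ω in t, (⨆ i, f i (ω (n + 1))) ∂μ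
        = ⨆ i, ∫⁻ ω in t, f i (ω (n + 1)) ∂μ :=
          lintegral_iSup (fun i => hm1 i) hmono1
      _ = ⨆ i, ∫⁻ ω in t, ∫⁻ y, f i y ∂(κ (ω n)) ∂μ := by simp_rw [hPf]
      _ = ∫⁻ ω in t, (⨆ i, ∫⁻ y, f i y ∂(κ (ω n))) ∂μ :=
          (lintegral_iSup (fun i => hm2 i) hmono2).symm
      _ = ∫⁻ ω in t, ∫⁻ y, (⨆ i, f i y) ∂(κ (ω n)) ∂μ := by
          congr 1
          ext ω
          exact (lintegral_iSup (fun i => hf i) (fun i j hij y => hmono hij y)).symm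

end Aux

/-- **Lamperti recurrence criterion.** A time-homogeneous Markov chain on `[0,∞)` with
uniformly bounded increments, second increment moment bounded away from zero, and drift
`μ₁(x) ≤ θ μ₂(x)/(2x)` for `x ≥ r` with `θ < 1`, is recurrent:
almost surely `liminf Xₙ < ∞`. -/
theorem lamperti_recurrence_criterion
    (κ : Kernel ℝ ℝ) [IsMarkovKernel κ]
    (μ : Measure (ℕ → ℝ)) [IsProbabilityMeasure μ]
    (htraj : IsMarkovTrajectory κ μ)
    (hstate : ∀ n : ℕ, ∀ᵐ ω ∂μ, 0 ≤ ω n)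
    (B : ℝ) (hB : ∀ x : ℝ, 0 ≤ x → ∀ᵐ y ∂(κ x), |y - x| ≤ B)
    (δ : ℝ) (hδ : 0 < δ) (hμ2 : ∀ x : ℝ, 0 ≤ x → δ ≤ mom κ 2 x)
    (θ r : ℝ) (hθ : θ < 1) (hr : 0 < r)
    (hdrift : ∀ x : ℝ, r ≤ x → mom κ 1 x ≤ θ * mom κ 2 x / (2 * x)) :
    ∀ᵐ ω ∂μ, ∃ M : ℝ, ∃ᶠ n in atTop, ω n ≤ M := by
  classical
  -- B is nonnegative
  have hB0 : 0 ≤ B := by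
    obtain ⟨y, hy⟩ := (hB 0 le_rfl).exists
    exact le_trans (abs_nonneg _) hy
  -- choose the level a
  set s0 := Real.sqrt (max θ 0) with hs0
  have hs0nonneg : 0 ≤ s0 := Real.sqrt_nonneg _
  have hs0lt : s0 < 1 := by
    rw [hs0]
    exact (Real.sqrt_lt' one_pos).2 (by simpa using max_lt hθ one_pos)
  set a := max (max r (B + 1)) (s0 * B / (1 - s0) + 1) with ha
  have har : r ≤ a := le_trans (le_max_left _ _) (le_max_left _ _)
  have haB : B + 1 ≤ a := le_trans (le_max_right _ _) (le_max_left _ _)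
  have ha1 : 1 ≤ a := by linarith
  have hx3 : ∀ x : ℝ, a ≤ x → θ * (x + B) ^ 2 ≤ x ^ 2 := by
    intro x hx
    have hx1 : B + 1 ≤ x := le_trans haB hx
    have hx0 : (0:ℝ) < x := by linarith
    have h1s : (0:ℝ) < 1 - s0 := by linarith
    have hx' : s0 * B / (1 - s0) + 1 ≤ x := le_trans (le_trans (le_max_right _ _) le_rfl) hx
    have hsb : s0 * B ≤ (x - 1) * (1 - s0) := by
      have := (div_le_iff₀ h1s).1 (by linarith : s0 * B / (1 - s0) ≤ x - 1)
      linarith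
    have hxs : s0 * (x + B) ≤ x := by nlinarith
    have h2 : θ ≤ s0 ^ 2 := by
      rw [hs0, Real.sq_sqrt (le_max_right θ 0)]
      exact le_max_left θ 0
    have hxB0 : (0:ℝ) ≤ x + B := by linarith
    nlinarith [sq_nonneg (x + B), mul_nonneg hs0nonneg hxB0]
  -- the Lyapunov function
  set F : ℝ → ENNReal := fun y => ENNReal.ofReal (Real.log (max y 1)) with hFdef
  have hFmeas : Measurable F :=
    ENNReal.measurable_ofReal.comp (Real.measurable_log.comp (measurable_id.max measurable_const))
  have hkey : ∀ x : ℝ, a ≤ x → ∫⁻ y, F y ∂(κ x) ≤ F x := by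
    intro x hx
    have hx0 : (0:ℝ) ≤ x := by linarith
    exact drift_step_aux κ hB0 (hB x hx0) hδ (hμ2 x hx0) (hdrift x (le_trans har hx))
      (le_trans haB hx) (hx3 x hx)
  rw [ae_iff]
  set A : ℕ → ℕ → Set (ℕ → ℝ) := fun N K =>
    {ω | Tendsto (fun n => ω n) atTop atTop ∧ ω N ≤ (K:ℝ) ∧ ∀ k, N ≤ k → a < ω k}
    with hA
  have hcover : {ω : ℕ → ℝ | ¬ ∃ M : ℝ, ∃ᶠ n in atTop, ω n ≤ M}
      ⊆ ⋃ (N : ℕ) (K : ℕ), A N K := by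
    intro ω hω
    simp only [Set.mem_setOf_eq] at hω
    push_neg at hω
    have htend : Tendsto (fun n => ω n) atTop atTop := by
      rw [tendsto_atTop]
      intro b
      have hb := hω b
      exact hb.mono fun n hn => le_of_lt hn
    obtain ⟨N, hN⟩ := Filter.eventually_atTop.1 (htend.eventually_gt_atTop a)
    refine Set.mem_iUnion.2 ⟨N, Set.mem_iUnion.2 ⟨⌈ω N⌉₊, htend, Nat.le_ceil _, hN⟩⟩
  refine measure_mono_null hcover
    (measure_iUnion_null fun N => measure_iUnion_null fun K => ?_)
  -- the pre-stopped events
  set C := ENNReal.ofReal (Real.log (max (K:ℝ) 1)) with hC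
  set G : ℕ → Set (ℕ → ℝ) := fun n =>
    {ω | ω N ≤ (K:ℝ) ∧ ∀ k, N ≤ k → k ≤ n → a < ω k} with hG
  have hGcomap : ∀ d : ℕ, MeasurableSet[MeasurableSpace.comap
      (fun (ω : ℕ → ℝ) (i : Fin (N + d + 1)) => ω i) inferInstance] (G (N + d)) := by
    intro d
    refine MeasurableSpace.measurableSet_comap.2
      ⟨{v : Fin (N + d + 1) → ℝ | v ⟨N, by omega⟩ ≤ (K:ℝ) ∧
          ∀ i : Fin (N + d + 1), N ≤ (i : ℕ) → a < v i}, ?_, ?_⟩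
    · apply MeasurableSet.inter
      · exact measurableSet_le (measurable_pi_apply _) measurable_const
      · show MeasurableSet {v : Fin (N + d + 1) → ℝ | ∀ i : Fin (N + d + 1), N ≤ (i : ℕ) → a < v i}
        rw [show {v : Fin (N + d + 1) → ℝ | ∀ i : Fin (N + d + 1), N ≤ (i : ℕ) → a < v i}
            = ⋂ i : Fin (N + d + 1), {v | N ≤ (i : ℕ) → a < v i} by
              ext v; simp [Set.mem_iInter]]
        apply MeasurableSet.iInter
        intro i
        by_cases hi : N ≤ (i : ℕ)
        · rw [show {v : Fin (N + d + 1) → ℝ | N ≤ (i : ℕ) → a < v i} = {v | a < v i} by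
            ext v; simp [hi]]
          exact measurableSet_lt measurable_const (measurable_pi_apply _)
        · rw [show {v : Fin (N + d + 1) → ℝ | N ≤ (i : ℕ) → a < v i} = Set.univ by
            ext v; simp [hi]]
          exact MeasurableSet.univ
    · ext ω
      simp only [Set.mem_preimage, Set.mem_setOf_eq, hG]
      constructor
      · rintro ⟨h1, h2⟩
        exact ⟨h1, fun k hk1 hk2 => h2 ⟨k, by omega⟩ hk1⟩
      · rintro ⟨h1, h2⟩
        exact ⟨h1, fun i hi => h2 (i : ℕ) hi (by omega)⟩
  have hproj : ∀ n : ℕ, Measurable fun (ω : ℕ → ℝ) (i : Fin (n + 1)) => ω i := fun n =>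
    measurable_pi_lambda _ fun i => measurable_pi_apply _
  have hGmeas : ∀ d : ℕ, MeasurableSet (G (N + d)) := by
    intro d
    obtain ⟨S', hS', hpre⟩ := MeasurableSpace.measurableSet_comap.1 (hGcomap d)
    rw [← hpre]
    exact hproj (N + d) hS'
  -- main estimate by induction
  have claim : ∀ d : ℕ, ∫⁻ ω in G (N + d), F (ω (N + d)) ∂μ ≤ C := by
    intro d
    induction d with
    | zero =>
      calc ∫⁻ ω in G (N + 0), F (ω (N + 0)) ∂μ
          ≤ ∫⁻ _ω in G (N + 0), C ∂μ := by
            apply setLIntegral_mono measurable_const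
            intro ω hω
            apply ENNReal.ofReal_le_ofReal
            apply Real.log_le_log (by positivity)
            exact max_le_max hω.1 le_rfl
        _ = C * μ (G (N + 0)) := setLIntegral_const _ _
        _ ≤ C * 1 := mul_le_mul_right prob_le_one _
        _ = C := mul_one _
    | succ d ih =>
      have hsub : G (N + (d + 1)) ⊆ G (N + d) := by
        rintro ω ⟨h1, h2⟩
        exact ⟨h1, fun k hk1 hk2 => h2 k hk1 (by omega)⟩
      calc ∫⁻ ω in G (N + (d + 1)), F (ω (N + (d + 1))) ∂μ
          ≤ ∫⁻ ω in G (N + d), F (ω (N + d + 1)) ∂μ := lintegral_mono_set hsub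
        _ = ∫⁻ ω in G (N + d), ∫⁻ y, F y ∂(κ (ω (N + d))) ∂μ :=
            kernel_step_aux κ μ htraj (N + d) _ (hGcomap d) F hFmeas
        _ ≤ ∫⁻ ω in G (N + d), F (ω (N + d)) ∂μ := by
            apply setLIntegral_mono (hFmeas.comp (measurable_pi_apply _))
            intro ω hω
            exact hkey _ (le_of_lt (hω.2 (N + d) (by omega) le_rfl))
        _ ≤ C := ih
  -- Fatou and conclusion
  set h : ℕ → (ℕ → ℝ) → ENNReal := fun d =>
    (G (N + d)).indicator (fun ω => F (ω (N + d))) with hh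
  have hhm : ∀ d, Measurable (h d) := fun d =>
    (hFmeas.comp (measurable_pi_apply _)).indicator (hGmeas d)
  have hbound : ∀ d, ∫⁻ ω, h d ω ∂μ ≤ C := by
    intro d
    rw [hh]
    rw [lintegral_indicator (hGmeas d)]
    exact claim d
  have hfatou : ∫⁻ ω, liminf (fun d => h d ω) atTop ∂μ ≠ ⊤ := by
    apply ne_top_of_le_ne_top (show C ≠ ⊤ from ENNReal.ofReal_ne_top)
    refine le_trans (lintegral_liminf_le hhm) ?_
    calc liminf (fun d => ∫⁻ ω, h d ω ∂μ) atTop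
        ≤ liminf (fun _d => C) atTop :=
          Filter.liminf_le_liminf (Filter.Eventually.of_forall hbound)
      _ = C := Filter.liminf_const _
  have haelt := ae_lt_top (Measurable.liminf hhm) hfatou
  rw [ae_iff] at haelt
  apply measure_mono_null _ haelt
  intro ω hω
  obtain ⟨htend, hNK, hgt⟩ := hω
  have hmem : ∀ d, ω ∈ G (N + d) := fun d => ⟨hNK, fun k hk _ => hgt k hk⟩
  have htendF : Tendsto (fun d => h d ω) atTop (nhds ⊤) := by
    have h1 : (fun d => h d ω) = fun d => F (ω (N + d)) := by
      funext d
      exact Set.indicator_of_mem (hmem d) _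
    rw [h1, hFdef]
    apply ENNReal.tendsto_ofReal_atTop.comp
    apply Real.tendsto_log_atTop.comp
    apply tendsto_atTop_mono (fun d => le_max_left (ω (N + d)) 1)
    apply htend.comp
    simpa [Nat.add_comm] using tendsto_add_atTop_nat N
  simp only [Set.mem_setOf_eq, not_lt, top_le_iff]
  rw [htendF.liminf_eq]
end

section
/- (Lamperti passage-time bound.) Let (X_n)_{n≥0} be a time-homogeneous Markov chain on [0,∞), and let μ_k(x) = E[(X_{n+1} − X_n)^k | X_n = x]. Suppose there exist ε̃ > 0 and A < ∞ such that for all x ≥ A the moment μ_2(x) exists and 2x μ_1(x) + μ_2(x) ≤ −ε̃. Let T = inf{n ≥ 0 : X_n ∈ [0, A]} be the first time the chain enters [0,A]. Then E[T] ≤ E[X_0²] / ε̃. -/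
open MeasureTheory ProbabilityTheory Filter Asymptotics
open scoped ENNReal

-- pointwise identity for the passage time
lemma passage_tsum (A : ℝ) (ω : ℕ → ℝ) :
    (⨅ (n : ℕ) (_ : ω n ≤ A), (n : ℝ≥0∞)) =
      ∑' n : ℕ, Set.indicator {ω' : ℕ → ℝ | ∀ k ≤ n, A < ω' k} (fun _ => (1 : ℝ≥0∞)) ω := by
  by_cases h : ∃ n, ω n ≤ A
  · set m := Nat.find h with hm
    have hmem : ∀ n : ℕ, (ω ∈ {ω' : ℕ → ℝ | ∀ k ≤ n, A < ω' k}) ↔ n < m := by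
      intro n
      constructor
      · intro hn
        by_contra hc
        push_neg at hc
        exact absurd (Nat.find_spec h) (not_le.2 (hn m hc))
      · intro hn k hk
        exact lt_of_not_ge (Nat.find_min h (lt_of_le_of_lt hk hn))
    have hL : (⨅ (n : ℕ) (_ : ω n ≤ A), (n : ℝ≥0∞)) = (m : ℝ≥0∞) := by
      apply le_antisymm
      · exact iInf₂_le m (Nat.find_spec h)
      · exact le_iInf₂ fun n hn => by exact_mod_cast Nat.find_min' h hn
    rw [hL]
    have : ∀ n : ℕ, Set.indicator {ω' : ℕ → ℝ | ∀ k ≤ n, A < ω' k} (fun _ => (1 : ℝ≥0∞)) ω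
        = if n < m then 1 else 0 := by
      intro n
      by_cases hn : n < m
      · rw [Set.indicator_of_mem ((hmem n).2 hn)]; simp [hn]
      · rw [Set.indicator_of_notMem (fun hc => hn ((hmem n).1 hc))]; simp [hn]
    simp_rw [this]
    rw [tsum_eq_sum (s := Finset.range m) (by intro n hn; simp at hn; simp [Nat.not_lt.2 hn]),
      Finset.sum_congr rfl (fun n hn => if_pos (Finset.mem_range.1 hn))]
    simp
  · push_neg at h
    have hL : (⨅ (n : ℕ) (_ : ω n ≤ A), (n : ℝ≥0∞)) = ⊤ := by
      simp only [iInf_eq_top]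
      intro n hn
      exact absurd hn (not_le.2 (h n))
    have hR : ∀ n : ℕ, Set.indicator {ω' : ℕ → ℝ | ∀ k ≤ n, A < ω' k}
        (fun _ => (1 : ℝ≥0∞)) ω = 1 :=
      fun n => Set.indicator_of_mem
        (show ω ∈ {ω' : ℕ → ℝ | ∀ k ≤ n, A < ω' k} from fun k _ => h k) _
    simp_rw [hL, hR]
    exact (ENNReal.tsum_const_eq_top_of_ne_zero one_ne_zero).symm

-- Markov property for lintegrals
lemma markov_lintegral (κ : Kernel ℝ ℝ) [IsMarkovKernel κ]
    (μ : Measure (ℕ → ℝ)) (htraj : IsMarkovTrajectory κ μ) (n : ℕ)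
    (t : Set (ℕ → ℝ))
    (ht : MeasurableSet[MeasurableSpace.comap (fun (ω : ℕ → ℝ) (i : Fin (n + 1)) => ω i)
        inferInstance] t)
    (g : ℝ → ℝ≥0∞) (hg : Measurable g) :
    ∫⁻ ω in t, g (ω (n + 1)) ∂μ = ∫⁻ ω in t, ∫⁻ y, g y ∂(κ (ω n)) ∂μ := by
  have hker : Measurable fun ω : ℕ → ℝ => κ (ω n) :=
    κ.measurable.comp (measurable_pi_apply n)
  have hmap : Measure.map (fun ω : ℕ → ℝ => ω (n + 1)) (μ.restrict t)
      = (μ.restrict t).bind (fun ω => κ (ω n)) := by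
    refine Measure.ext fun s hs => ?_
    have e1 : Measure.map (fun ω : ℕ → ℝ => ω (n + 1)) (μ.restrict t) s
        = (μ.restrict t) ((fun ω : ℕ → ℝ => ω (n + 1)) ⁻¹' s) :=
      Measure.map_apply (measurable_pi_apply (n + 1)) hs
    have e2 : ((μ.restrict t).bind fun ω => κ (ω n)) s = ∫⁻ ω in t, κ (ω n) s ∂μ :=
      Measure.bind_apply hs hker.aemeasurable
    rw [e1, e2, Measure.restrict_apply ((measurable_pi_apply (n + 1)) hs), Set.inter_comm]
    exact htraj n s hs t ht
  calc ∫⁻ ω in t, g (ω (n + 1)) ∂μ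
      = ∫⁻ x, g x ∂(Measure.map (fun ω : ℕ → ℝ => ω (n + 1)) (μ.restrict t)) :=
        (lintegral_map hg (measurable_pi_apply _)).symm
    _ = ∫⁻ x, g x ∂((μ.restrict t).bind (fun ω => κ (ω n))) := by rw [hmap]
    _ = ∫⁻ ω in t, ∫⁻ y, g y ∂(κ (ω n)) ∂μ := Measure.lintegral_bind hker.aemeasurable hg.aemeasurable

/-- **Lamperti passage-time bound.** If `2x μ₁(x) + μ₂(x) ≤ −ε̃` for all `x ≥ A`, then the
first entrance time `T` of the chain into `[0, A]` satisfies `E[T] ≤ E[X₀²]/ε̃`. -/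
theorem lamperti_passage_time_bound
    (κ : Kernel ℝ ℝ) [IsMarkovKernel κ]
    (μ : Measure (ℕ → ℝ)) [IsProbabilityMeasure μ]
    (htraj : IsMarkovTrajectory κ μ)
    (hstate : ∀ n : ℕ, ∀ᵐ ω ∂μ, 0 ≤ ω n)
    (eps A : ℝ) (heps : 0 < eps)
    (hint : ∀ x : ℝ, A ≤ x → Integrable (fun y => y - x) (κ x) ∧
      Integrable (fun y => (y - x) ^ 2) (κ x))
    (hdrift : ∀ x : ℝ, A ≤ x → 2 * x * mom κ 1 x + mom κ 2 x ≤ -eps) :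
    ∫⁻ ω, (⨅ (n : ℕ) (_ : ω n ≤ A), (n : ℝ≥0∞)) ∂μ ≤
      (∫⁻ ω, ENNReal.ofReal ((ω 0) ^ 2) ∂μ) / ENNReal.ofReal eps := by
  -- S n : the event T > n
  set S : ℕ → Set (ℕ → ℝ) := fun n => {ω : ℕ → ℝ | ∀ k ≤ n, A < ω k} with hS
  have hSmeas : ∀ n, MeasurableSet (S n) := by
    intro n
    have : S n = ⋂ k, ⋂ (_ : k ≤ n), {ω : ℕ → ℝ | A < ω k} := by
      ext ω; simp [hS, Set.mem_iInter]
    rw [this]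
    exact MeasurableSet.iInter fun k => MeasurableSet.iInter fun _ =>
      measurableSet_lt measurable_const (measurable_pi_apply k)
  have hScomap : ∀ n, MeasurableSet[MeasurableSpace.comap
      (fun (ω : ℕ → ℝ) (i : Fin (n + 1)) => ω i) inferInstance] (S n) := by
    intro n
    refine ⟨{v : Fin (n + 1) → ℝ | ∀ i, A < v i}, ?_, ?_⟩
    · have : {v : Fin (n + 1) → ℝ | ∀ i, A < v i} = ⋂ i, {v : Fin (n + 1) → ℝ | A < v i} := by
        ext v; simp
      rw [this]
      exact MeasurableSet.iInter fun i =>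
        measurableSet_lt measurable_const (measurable_pi_apply i)
    · ext ω
      simp only [Set.mem_preimage, Set.mem_setOf_eq, hS]
      constructor
      · intro h k hk; exact h ⟨k, Nat.lt_succ_of_le hk⟩
      · intro h i; exact h i (Nat.lt_succ_iff.1 i.2)
  have hSmono : ∀ n, S (n + 1) ⊆ S n := by
    intro n ω hω k hk; exact hω k (hk.trans (Nat.le_succ n))
  -- second moment computation
  have hsq : ∀ x : ℝ, A ≤ x →
      Integrable (fun y => y ^ 2) (κ x) ∧
      ∫ y, y ^ 2 ∂(κ x) = x ^ 2 + 2 * x * mom κ 1 x + mom κ 2 x := by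
    intro x hx
    obtain ⟨h1, h2⟩ := hint x hx
    have heq : (fun y : ℝ => y ^ 2)
        = fun y => (x ^ 2 + 2 * x * (y - x)) + (y - x) ^ 2 := by
      funext y; ring
    have hi1 : Integrable (fun y : ℝ => x ^ 2 + 2 * x * (y - x)) (κ x) :=
      (integrable_const _).add (h1.const_mul _)
    constructor
    · rw [heq]; exact hi1.add h2
    · rw [heq, integral_add hi1 h2, integral_add (integrable_const _) (h1.const_mul _),
        integral_const, integral_const_mul]
      simp [mom, measure_univ]
  -- key pointwise bound
  have hkey : ∀ x : ℝ, A ≤ x →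
      (∫⁻ y, ENNReal.ofReal (y ^ 2) ∂(κ x)) + ENNReal.ofReal eps ≤ ENNReal.ofReal (x ^ 2) := by
    intro x hx
    have hI := (hsq x hx).1
    have hIv := (hsq x hx).2
    have hlin : ∫⁻ y, ENNReal.ofReal (y ^ 2) ∂(κ x) = ENNReal.ofReal (∫ y, y ^ 2 ∂(κ x)) :=
      (ofReal_integral_eq_lintegral_ofReal hI
        (Filter.Eventually.of_forall fun y => sq_nonneg y)).symm
    have hnn : 0 ≤ ∫ y, y ^ 2 ∂(κ x) :=
      integral_nonneg fun y => sq_nonneg y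
    have hle : ∫ y, y ^ 2 ∂(κ x) + eps ≤ x ^ 2 := by
      have := hdrift x hx
      rw [hIv]; linarith
    rw [hlin, ← ENNReal.ofReal_add hnn heps.le]
    exact ENNReal.ofReal_le_ofReal hle
  -- the sequence a n
  set a : ℕ → ℝ≥0∞ := fun n => ∫⁻ ω in S n, ENNReal.ofReal ((ω n) ^ 2) ∂μ with ha
  -- step inequality
  have hstep : ∀ n, a (n + 1) + ENNReal.ofReal eps * μ (S n) ≤ a n := by
    intro n
    have h1 : a (n + 1) ≤ ∫⁻ ω in S n, ENNReal.ofReal ((ω (n + 1)) ^ 2) ∂μ :=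
      lintegral_mono_set (hSmono n)
    have h2 : ∫⁻ ω in S n, ENNReal.ofReal ((ω (n + 1)) ^ 2) ∂μ
        = ∫⁻ ω in S n, ∫⁻ y, ENNReal.ofReal (y ^ 2) ∂(κ (ω n)) ∂μ :=
      markov_lintegral κ μ htraj n (S n) (hScomap n) _
        ((measurable_id.pow_const 2).ennreal_ofReal)
    have h3 : (∫⁻ ω in S n, ∫⁻ y, ENNReal.ofReal (y ^ 2) ∂(κ (ω n)) ∂μ)
        + ENNReal.ofReal eps * μ (S n) ≤ a n := by
      have hconst : ENNReal.ofReal eps * μ (S n)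
          = ∫⁻ _ω in S n, ENNReal.ofReal eps ∂μ := by
        rw [setLIntegral_const]
      rw [hconst, ← lintegral_add_right _ measurable_const]
      exact setLIntegral_mono' (hSmeas n) fun ω hω => hkey (ω n) (hω n le_rfl).le
    calc a (n + 1) + ENNReal.ofReal eps * μ (S n)
        ≤ (∫⁻ ω in S n, ∫⁻ y, ENNReal.ofReal (y ^ 2) ∂(κ (ω n)) ∂μ)
            + ENNReal.ofReal eps * μ (S n) := by
          rw [← h2]; exact add_le_add_left h1 _
      _ ≤ a n := h3
  -- summed inequality
  have hsum : ∀ N : ℕ, a N + ENNReal.ofReal eps * ∑ n ∈ Finset.range N, μ (S n) ≤ a 0 := by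
    intro N
    induction N with
    | zero => simp
    | succ N ih =>
        calc a (N + 1) + ENNReal.ofReal eps * ∑ n ∈ Finset.range (N + 1), μ (S n)
            = (a (N + 1) + ENNReal.ofReal eps * μ (S N))
                + ENNReal.ofReal eps * ∑ n ∈ Finset.range N, μ (S n) := by
              rw [Finset.sum_range_succ, mul_add]; ring
          _ ≤ a N + ENNReal.ofReal eps * ∑ n ∈ Finset.range N, μ (S n) :=
              add_le_add_left (hstep N) _
          _ ≤ a 0 := ih
  have ha0 : a 0 ≤ ∫⁻ ω, ENNReal.ofReal ((ω 0) ^ 2) ∂μ := setLIntegral_le_lintegral _ _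
  -- rewrite LHS
  have hT : ∫⁻ ω, (⨅ (n : ℕ) (_ : ω n ≤ A), (n : ℝ≥0∞)) ∂μ = ∑' n : ℕ, μ (S n) := by
    have : ∀ ω : ℕ → ℝ, (⨅ (n : ℕ) (_ : ω n ≤ A), (n : ℝ≥0∞))
        = ∑' n : ℕ, Set.indicator (S n) (fun _ => (1 : ℝ≥0∞)) ω := fun ω => passage_tsum A ω
    simp_rw [this]
    rw [lintegral_tsum fun n => (measurable_const.indicator (hSmeas n)).aemeasurable]
    congr 1
    funext n
    rw [lintegral_indicator (hSmeas n)]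
    simp
  rw [hT]
  refine ENNReal.summable.tsum_le_of_sum_range_le fun N => ?_
  rw [ENNReal.le_div_iff_mul_le (Or.inl (by simp [heps])) (Or.inl ENNReal.ofReal_ne_top),
    mul_comm]
  calc ENNReal.ofReal eps * ∑ n ∈ Finset.range N, μ (S n)
      ≤ a N + ENNReal.ofReal eps * ∑ n ∈ Finset.range N, μ (S n) := le_add_self
    _ ≤ a 0 := hsum N
    _ ≤ _ := ha0
end
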